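/- arXiv:1205.3119 — 5 statements merged into one kernel-verified Lean document; each statement's English description precedes it below -/
import Mathlib

section
/- Let |ψ⟩ = Σ_{η ∈ [d]^n} c_η |η⟩ be a normalized pure state of n qudits and let γ ⊆ {1,…,n} define a bipartition. Then the linear entropy of the reduced state satisfies S_L(ρ_γ) := 2(1 − Tr(ρ_γ²)) = Σ_{η₁ ≠ η₂} |c_{η₁} c_{η₂} − c_{η₁^γ} c_{η₂^γ}|², where (η₁^γ, η₂^γ) = P_γ(η₁, η₂) exchanges the components of η₁ and η₂ at positions in γ. -/
open Finset

/-- The swap operator `P_γ` on pairs of multi-indices: the first output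
(`η₁^γ`) takes its `γ`-components from `η₂` and the rest from `η₁`. -/
def swapIdx {n d : ℕ} (γ : Finset (Fin n)) (η₁ η₂ : Fin n → Fin d) : Fin n → Fin d :=
  fun k => if k ∈ γ then η₂ k else η₁ k

/-- Merge a `γ`-part and a `γ̄`-part into a full multi-index. -/
def mergeIdx {n d : ℕ} (γ : Finset (Fin n)) (α : {k // k ∈ γ} → Fin d)
    (β : {k // k ∉ γ} → Fin d) : Fin n → Fin d :=
  fun k => if h : k ∈ γ then α ⟨k, h⟩ else β ⟨k, h⟩

/-- The reduced density matrix `ρ_γ = Tr_{γ̄}(|ψ⟩⟨ψ|)` of the pure state with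
coefficients `c` in the computational basis. -/
noncomputable def redMat {n d : ℕ} (γ : Finset (Fin n)) (c : (Fin n → Fin d) → ℂ) :
    Matrix ({k // k ∈ γ} → Fin d) ({k // k ∈ γ} → Fin d) ℂ :=
  fun α₁ α₂ => ∑ β : {k // k ∉ γ} → Fin d,
    c (mergeIdx γ α₁ β) * (starRingEnd ℂ) (c (mergeIdx γ α₂ β))

namespace LEAux

variable {n d : ℕ}

def idxEquiv (γ : Finset (Fin n)) :
    (Fin n → Fin d) ≃ ({k // k ∈ γ} → Fin d) × ({k // k ∉ γ} → Fin d) where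
  toFun η := (fun k => η k.1, fun k => η k.1)
  invFun p := mergeIdx γ p.1 p.2
  left_inv η := by
    funext k
    by_cases h : k ∈ γ <;> simp [mergeIdx, h]
  right_inv p := by
    obtain ⟨α, β⟩ := p
    refine Prod.ext ?_ ?_ <;> funext k
    · simp [mergeIdx, k.2]
    · simp [mergeIdx, k.2]

lemma sum_merge (γ : Finset (Fin n)) (f : (Fin n → Fin d) → ℂ) :
    ∑ η, f η = ∑ α : {k // k ∈ γ} → Fin d, ∑ β : {k // k ∉ γ} → Fin d,
      f (mergeIdx γ α β) := by
  rw [← Equiv.sum_comp (idxEquiv (n := n) (d := d) γ).symm f, Fintype.sum_prod_type]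
  rfl

lemma swap_merge (γ : Finset (Fin n)) (α₁ α₂ : {k // k ∈ γ} → Fin d)
    (β₁ β₂ : {k // k ∉ γ} → Fin d) :
    swapIdx γ (mergeIdx γ α₁ β₁) (mergeIdx γ α₂ β₂) = mergeIdx γ α₂ β₁ := by
  funext k
  by_cases h : k ∈ γ <;> simp [swapIdx, mergeIdx, h]

lemma swap_self (γ : Finset (Fin n)) (η : Fin n → Fin d) : swapIdx γ η η = η := by
  funext k; simp [swapIdx]

lemma swap_swap (γ : Finset (Fin n)) (η₁ η₂ : Fin n → Fin d) :
    swapIdx γ (swapIdx γ η₁ η₂) (swapIdx γ η₂ η₁) = η₁ := by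
  funext k
  by_cases h : k ∈ γ <;> simp [swapIdx, h]

lemma trace_sq (γ : Finset (Fin n)) (c : (Fin n → Fin d) → ℂ) :
    Matrix.trace (redMat γ c * redMat γ c)
      = ∑ η₁ : Fin n → Fin d, ∑ η₂ : Fin n → Fin d,
          c η₁ * c η₂ * (starRingEnd ℂ) (c (swapIdx γ η₁ η₂)) *
            (starRingEnd ℂ) (c (swapIdx γ η₂ η₁)) := by
  conv_rhs => simp only [sum_merge γ]
  simp only [swap_merge]
  simp only [Matrix.trace, Matrix.mul_apply, Matrix.diag, redMat, Finset.sum_mul,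
    Finset.mul_sum]
  rw [Finset.sum_comm]
  refine Finset.sum_congr rfl fun α₁ _ => ?_
  rw [Finset.sum_comm]
  refine Finset.sum_congr rfl fun α₂ _ => Finset.sum_congr rfl fun β₁ _ =>
    Finset.sum_congr rfl fun β₂ _ => ?_
  ring

end LEAux

open LEAux in
/-- For a normalized `n`-qudit pure state `|ψ⟩ = Σ_η c_η |η⟩` and a bipartition `γ`,
the linear entropy `S_L(ρ_γ) = 2(1 − Tr ρ_γ²)` of the reduced state equals
`Σ_{η₁ ≠ η₂} |c_{η₁} c_{η₂} − c_{η₁^γ} c_{η₂^γ}|²`. -/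
theorem linear_entropy_formula {n d : ℕ} (γ : Finset (Fin n)) (c : (Fin n → Fin d) → ℂ)
    (hnorm : ∑ η : Fin n → Fin d, Complex.normSq (c η) = 1) :
    2 * (1 - (Matrix.trace (redMat γ c * redMat γ c)).re) =
      ∑ q ∈ univ.filter (fun q : (Fin n → Fin d) × (Fin n → Fin d) => q.1 ≠ q.2),
        ‖c q.1 * c q.2 - c (swapIdx γ q.1 q.2) * c (swapIdx γ q.2 q.1)‖ ^ 2 := by
  have hext :
      ∑ q ∈ univ.filter (fun q : (Fin n → Fin d) × (Fin n → Fin d) => q.1 ≠ q.2),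
          ‖c q.1 * c q.2 - c (swapIdx γ q.1 q.2) * c (swapIdx γ q.2 q.1)‖ ^ 2
        = ∑ q : (Fin n → Fin d) × (Fin n → Fin d),
          ‖c q.1 * c q.2 - c (swapIdx γ q.1 q.2) * c (swapIdx γ q.2 q.1)‖ ^ 2 := by
    refine Finset.sum_subset (Finset.filter_subset _ _) fun q _ hq => ?_
    have h : q.1 = q.2 := by
      by_contra h
      exact hq (Finset.mem_filter.mpr ⟨Finset.mem_univ q, h⟩)
    rw [h, swap_self]
    simp
  rw [hext]
  simp only [Complex.sq_norm, Complex.normSq_sub, Fintype.sum_prod_type]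
  have hA : ∑ η₁ : Fin n → Fin d, ∑ η₂ : Fin n → Fin d,
      Complex.normSq (c η₁ * c η₂) = 1 := by
    simp only [Complex.normSq_mul, ← Finset.sum_mul_sum, hnorm, one_mul]
  have hbij : Function.Bijective
      (fun q : (Fin n → Fin d) × (Fin n → Fin d) =>
        (swapIdx γ q.1 q.2, swapIdx γ q.2 q.1)) := by
    have hinv : Function.Involutive
        (fun q : (Fin n → Fin d) × (Fin n → Fin d) =>
          (swapIdx γ q.1 q.2, swapIdx γ q.2 q.1)) := by
      intro q
      exact Prod.ext (swap_swap γ q.1 q.2) (swap_swap γ q.2 q.1)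
    exact hinv.bijective
  have hB : ∑ η₁ : Fin n → Fin d, ∑ η₂ : Fin n → Fin d,
      Complex.normSq (c (swapIdx γ η₁ η₂) * c (swapIdx γ η₂ η₁)) = 1 := by
    rw [← Fintype.sum_prod_type']
    rw [Fintype.sum_bijective _ hbij _
      (fun q : (Fin n → Fin d) × (Fin n → Fin d) =>
        Complex.normSq (c q.1 * c q.2)) (fun q => rfl)]
    exact (Fintype.sum_prod_type' _).trans hA
  have hC : ∑ η₁ : Fin n → Fin d, ∑ η₂ : Fin n → Fin d,
      (c η₁ * c η₂ *
        (starRingEnd ℂ) (c (swapIdx γ η₁ η₂) * c (swapIdx γ η₂ η₁))).re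
      = (Matrix.trace (redMat γ c * redMat γ c)).re := by
    rw [trace_sq]
    rw [Complex.re_sum]
    refine Finset.sum_congr rfl fun η₁ _ => ?_
    rw [Complex.re_sum]
    refine Finset.sum_congr rfl fun η₂ _ => ?_
    congr 1
    simp [map_mul, mul_assoc]
  simp only [Finset.sum_add_distrib, Finset.sum_sub_distrib, ← Finset.mul_sum, hA, hB, hC]
  ring
end

section
/- Let |ψ⟩ = Σ_η c_η |η⟩ be a normalized pure n-qudit state and γ a bipartition. Then Tr(ρ_γ²) = 1 − (1/2) Σ_{η₁, η₂} |c_{η₁} c_{η₂} − c_{η₁^γ} c_{η₂^γ}|², where the sum runs over all pairs of multi-indices. -/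
open Finset

namespace PurityAux

variable {n d : ℕ}

/-- Merging is an equivalence between split and full multi-indices. -/
def mergeEquiv (γ : Finset (Fin n)) :
    (({k // k ∈ γ} → Fin d) × ({k // k ∉ γ} → Fin d)) ≃ (Fin n → Fin d) where
  toFun p := mergeIdx γ p.1 p.2
  invFun η := (fun k => η k.1, fun k => η k.1)
  left_inv p := by
    ext k
    · simp [mergeIdx, k.2]
    · simp [mergeIdx, k.2]
  right_inv η := by
    funext k
    by_cases h : k ∈ γ <;> simp [mergeIdx, h]

lemma swap_merge₁ (γ : Finset (Fin n)) (α₁ α₂ : {k // k ∈ γ} → Fin d)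
    (β₁ β₂ : {k // k ∉ γ} → Fin d) :
    swapIdx γ (mergeIdx γ α₁ β₁) (mergeIdx γ α₂ β₂) = mergeIdx γ α₂ β₁ := by
  funext k
  by_cases h : k ∈ γ <;> simp [swapIdx, mergeIdx, h]

lemma swap_swap (γ : Finset (Fin n)) (η₁ η₂ : Fin n → Fin d) :
    swapIdx γ (swapIdx γ η₁ η₂) (swapIdx γ η₂ η₁) = η₁ := by
  funext k
  by_cases h : k ∈ γ <;> simp [swapIdx, h]

/-- Swapping a pair of multi-indices is an involutive equivalence on pairs. -/
def pairSwapEquiv (γ : Finset (Fin n)) :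
    ((Fin n → Fin d) × (Fin n → Fin d)) ≃ ((Fin n → Fin d) × (Fin n → Fin d)) where
  toFun p := (swapIdx γ p.1 p.2, swapIdx γ p.2 p.1)
  invFun p := (swapIdx γ p.1 p.2, swapIdx γ p.2 p.1)
  left_inv p := by simp [Prod.ext_iff, swap_swap]
  right_inv p := by simp [Prod.ext_iff, swap_swap]

lemma trace_eq (γ : Finset (Fin n)) (c : (Fin n → Fin d) → ℂ) :
    Matrix.trace (redMat γ c * redMat γ c) =
      ∑ η₁ : Fin n → Fin d, ∑ η₂ : Fin n → Fin d,
        c η₁ * c η₂ * (starRingEnd ℂ) (c (swapIdx γ η₁ η₂) * c (swapIdx γ η₂ η₁)) := by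
  have hrhs :
      ∑ η₁ : Fin n → Fin d, ∑ η₂ : Fin n → Fin d,
        c η₁ * c η₂ * (starRingEnd ℂ) (c (swapIdx γ η₁ η₂) * c (swapIdx γ η₂ η₁))
      = ∑ p₁ : (({k // k ∈ γ} → Fin d) × ({k // k ∉ γ} → Fin d)),
          ∑ p₂ : (({k // k ∈ γ} → Fin d) × ({k // k ∉ γ} → Fin d)),
        c (mergeIdx γ p₁.1 p₁.2) * c (mergeIdx γ p₂.1 p₂.2) *
          (starRingEnd ℂ) (c (mergeIdx γ p₂.1 p₁.2) * c (mergeIdx γ p₁.1 p₂.2)) := by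
    rw [← Equiv.sum_comp (mergeEquiv γ) (fun η₁ => ∑ η₂ : Fin n → Fin d,
        c η₁ * c η₂ * (starRingEnd ℂ) (c (swapIdx γ η₁ η₂) * c (swapIdx γ η₂ η₁)))]
    refine Finset.sum_congr rfl fun p₁ _ => ?_
    rw [← Equiv.sum_comp (mergeEquiv γ) (fun η₂ =>
        c (mergeEquiv γ p₁) * c η₂ *
          (starRingEnd ℂ) (c (swapIdx γ (mergeEquiv γ p₁) η₂) * c (swapIdx γ η₂ (mergeEquiv γ p₁))))]
    refine Finset.sum_congr rfl fun p₂ _ => ?_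
    simp only [mergeEquiv, Equiv.coe_fn_mk, swap_merge₁]
  rw [hrhs]
  simp only [Matrix.trace, Matrix.diag, Matrix.mul_apply, redMat, Fintype.sum_prod_type,
    Finset.sum_mul_sum]
  refine Finset.sum_congr rfl fun a _ => ?_
  rw [Finset.sum_comm]
  refine Finset.sum_congr rfl fun β₁ _ => Finset.sum_congr rfl fun b _ =>
    Finset.sum_congr rfl fun β₂ _ => ?_
  simp only [map_mul]
  ring

end PurityAux

/-- For a normalized `n`-qudit pure state with coefficients `c` and a bipartition `γ`,
`Tr(ρ_γ²) = 1 − (1/2) Σ_{η₁, η₂} |c_{η₁} c_{η₂} − c_{η₁^γ} c_{η₂^γ}|²`, where the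
sum runs over all pairs of multi-indices. -/
theorem purity_formula {n d : ℕ} (γ : Finset (Fin n)) (c : (Fin n → Fin d) → ℂ)
    (hnorm : ∑ η : Fin n → Fin d, Complex.normSq (c η) = 1) :
    (Matrix.trace (redMat γ c * redMat γ c)).re =
      1 - (1 / 2) * ∑ η₁ : Fin n → Fin d, ∑ η₂ : Fin n → Fin d,
        ‖c η₁ * c η₂ - c (swapIdx γ η₁ η₂) * c (swapIdx γ η₂ η₁)‖ ^ 2 := by
  classical
  have hA : ∑ η₁ : Fin n → Fin d, ∑ η₂ : Fin n → Fin d,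
      Complex.normSq (c η₁ * c η₂) = 1 := by
    simp only [Complex.normSq_mul]
    rw [← Finset.sum_mul_sum, hnorm, one_mul]
  have hB : ∑ η₁ : Fin n → Fin d, ∑ η₂ : Fin n → Fin d,
      Complex.normSq (c (swapIdx γ η₁ η₂) * c (swapIdx γ η₂ η₁)) = 1 := by
    rw [← Fintype.sum_prod_type
      (fun p => Complex.normSq (c (swapIdx γ p.1 p.2) * c (swapIdx γ p.2 p.1)))]
    have := Equiv.sum_comp (PurityAux.pairSwapEquiv (d := d) γ)
      (fun p : (Fin n → Fin d) × (Fin n → Fin d) => Complex.normSq (c p.1 * c p.2))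
    simp only [PurityAux.pairSwapEquiv, Equiv.coe_fn_mk] at this
    rw [this, Fintype.sum_prod_type]
    exact hA
  have hkey : ∑ η₁ : Fin n → Fin d, ∑ η₂ : Fin n → Fin d,
      ‖c η₁ * c η₂ - c (swapIdx γ η₁ η₂) * c (swapIdx γ η₂ η₁)‖ ^ 2
      = 2 - 2 * (Matrix.trace (redMat γ c * redMat γ c)).re := by
    simp only [Complex.sq_norm, Complex.normSq_sub]
    simp only [Finset.sum_sub_distrib, Finset.sum_add_distrib, hA, hB,
      ← Finset.mul_sum]
    rw [PurityAux.trace_eq γ c, Complex.re_sum]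
    simp only [Complex.re_sum]
    ring
  rw [hkey]
  ring
end

section
/- Let |ψ⟩ = Σ c_{ijk} |ijk⟩ be a normalized three-qubit pure state. Then √(S_L(ρ₁)) ≥ √2 · (|c_{001} c_{100}| − |c_{101} c_{000}| + |c_{010} c_{100}| − |c_{110} c_{000}|), where ρ₁ is the reduced state of the first qubit and S_L(ρ₁) = 2(1 − Tr ρ₁²). -/
open Finset

/-- The reduced density matrix of the first qubit of a three-qubit pure state
with coefficients `c i j k`. -/
noncomputable def rho1 (c : Fin 2 → Fin 2 → Fin 2 → ℂ) : Matrix (Fin 2) (Fin 2) ℂ :=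
  fun i i' => ∑ j : Fin 2, ∑ k : Fin 2, c i j k * (starRingEnd ℂ) (c i' j k)

/-- For a normalized three-qubit pure state `|ψ⟩ = Σ c_{ijk}|ijk⟩`,
`√(S_L(ρ₁)) ≥ √2 (|c₀₀₁ c₁₀₀| − |c₁₀₁ c₀₀₀| + |c₀₁₀ c₁₀₀| − |c₁₁₀ c₀₀₀|)`,
where `S_L(ρ₁) = 2(1 − Tr ρ₁²)`. -/
theorem sqrt_linear_entropy_first_qubit_bound (c : Fin 2 → Fin 2 → Fin 2 → ℂ)
    (hnorm : ∑ i : Fin 2, ∑ j : Fin 2, ∑ k : Fin 2, Complex.normSq (c i j k) = 1) :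
    Real.sqrt (2 * (1 - (Matrix.trace (rho1 c * rho1 c)).re)) ≥
      Real.sqrt 2 *
        (‖c 0 0 1 * c 1 0 0‖ - ‖c 1 0 1 * c 0 0 0‖ +
         ‖c 0 1 0 * c 1 0 0‖ - ‖c 1 1 0 * c 0 0 0‖) := by
  set A := c 0 0 1 * c 1 0 0 - c 1 0 1 * c 0 0 0 with hA
  set B := c 0 1 0 * c 1 0 0 - c 1 1 0 * c 0 0 0 with hB
  have key : 2 * ((∑ i : Fin 2, ∑ j : Fin 2, ∑ k : Fin 2, Complex.normSq (c i j k)) *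
        (∑ i : Fin 2, ∑ j : Fin 2, ∑ k : Fin 2, Complex.normSq (c i j k))
        - (Matrix.trace (rho1 c * rho1 c)).re) =
      4 * (Complex.normSq A + Complex.normSq B
         + Complex.normSq (c 0 0 0 * c 1 1 1 - c 1 0 0 * c 0 1 1)
         + Complex.normSq (c 0 0 1 * c 1 1 0 - c 1 0 1 * c 0 1 0)
         + Complex.normSq (c 0 0 1 * c 1 1 1 - c 1 0 1 * c 0 1 1)
         + Complex.normSq (c 0 1 0 * c 1 1 1 - c 1 1 0 * c 0 1 1)) := by
    rw [hA, hB]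
    simp only [Matrix.trace, Matrix.diag, Matrix.mul_apply, rho1, Fin.sum_univ_two,
      Complex.add_re, Complex.mul_re, Complex.mul_im, Complex.add_im, Complex.sub_re,
      Complex.sub_im, Complex.conj_re, Complex.conj_im, Complex.normSq_apply]
    ring
  rw [hnorm] at key
  have hkey : 4 * (Complex.normSq A + Complex.normSq B)
      ≤ 2 * (1 - (Matrix.trace (rho1 c * rho1 c)).re) := by
    have h1 := Complex.normSq_nonneg (c 0 0 0 * c 1 1 1 - c 1 0 0 * c 0 1 1)
    have h2 := Complex.normSq_nonneg (c 0 0 1 * c 1 1 0 - c 1 0 1 * c 0 1 0)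
    have h3 := Complex.normSq_nonneg (c 0 0 1 * c 1 1 1 - c 1 0 1 * c 0 1 1)
    have h4 := Complex.normSq_nonneg (c 0 1 0 * c 1 1 1 - c 1 1 0 * c 0 1 1)
    linarith
  -- triangle inequalities
  have htA : ‖c 0 0 1 * c 1 0 0‖ - ‖c 1 0 1 * c 0 0 0‖
      ≤ ‖A‖ := norm_sub_norm_le _ _
  have htB : ‖c 0 1 0 * c 1 0 0‖ - ‖c 1 1 0 * c 0 0 0‖
      ≤ ‖B‖ := norm_sub_norm_le _ _
  -- chain
  have hmid : Real.sqrt 2 * (‖A‖ + ‖B‖)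
      ≤ Real.sqrt (4 * (Complex.normSq A + Complex.normSq B)) := by
    have hsplit : Real.sqrt (4 * (Complex.normSq A + Complex.normSq B))
        = Real.sqrt 2 * Real.sqrt (2 * (Complex.normSq A + Complex.normSq B)) := by
      rw [← Real.sqrt_mul (by norm_num : (0:ℝ) ≤ 2)]
      ring_nf
    rw [hsplit]
    refine mul_le_mul_of_nonneg_left ?_ (Real.sqrt_nonneg 2)
    rw [Real.le_sqrt (add_nonneg (norm_nonneg _) (norm_nonneg _)) (by nlinarith [Complex.normSq_nonneg A, Complex.normSq_nonneg B])]
    have hA2 := Complex.sq_norm A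
    have hB2 := Complex.sq_norm B
    nlinarith [sq_nonneg (‖A‖ - ‖B‖)]
  have hsq : Real.sqrt (4 * (Complex.normSq A + Complex.normSq B))
      ≤ Real.sqrt (2 * (1 - (Matrix.trace (rho1 c * rho1 c)).re)) :=
    Real.sqrt_le_sqrt hkey
  have habs : ‖c 0 0 1 * c 1 0 0‖ - ‖c 1 0 1 * c 0 0 0‖ +
      (‖c 0 1 0 * c 1 0 0‖ - ‖c 1 1 0 * c 0 0 0‖)
      ≤ ‖A‖ + ‖B‖ := by linarith
  have h2 : (0:ℝ) ≤ Real.sqrt 2 := Real.sqrt_nonneg 2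
  calc Real.sqrt 2 * (‖c 0 0 1 * c 1 0 0‖ - ‖c 1 0 1 * c 0 0 0‖ +
         ‖c 0 1 0 * c 1 0 0‖ - ‖c 1 1 0 * c 0 0 0‖)
      ≤ Real.sqrt 2 * (‖A‖ + ‖B‖) := by nlinarith
    _ ≤ Real.sqrt (4 * (Complex.normSq A + Complex.normSq B)) := hmid
    _ ≤ _ := hsq
end

section
/- For any normalized three-qubit pure state |ψ⟩ with coefficients c_{ijk}, the genuine multipartite entanglement measure E_m(|ψ⟩) = min_γ √(S_L(ρ_γ)) satisfies E_m(|ψ⟩) ≥ √2 (|c_{001}c_{100}| + |c_{001}c_{010}| + |c_{100}c_{010}|) − (√2/2)(|c_{010}|² + |c_{100}|² + |c_{001}|²) − √2 (|c_{101}c_{000}| + |c_{110}c_{000}| + |c_{011}c_{000}|). -/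
open Finset

/-- Reduced density matrix of the second qubit. -/
noncomputable def rho2 (c : Fin 2 → Fin 2 → Fin 2 → ℂ) : Matrix (Fin 2) (Fin 2) ℂ :=
  fun j j' => ∑ i : Fin 2, ∑ k : Fin 2, c i j k * (starRingEnd ℂ) (c i j' k)

/-- Reduced density matrix of the third qubit. -/
noncomputable def rho3 (c : Fin 2 → Fin 2 → Fin 2 → ℂ) : Matrix (Fin 2) (Fin 2) ℂ :=
  fun k k' => ∑ i : Fin 2, ∑ j : Fin 2, c i j k * (starRingEnd ℂ) (c i j k')

/-- `√(S_L(ρ))` for a one-qubit reduced matrix `ρ`. -/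
noncomputable def sqrtSL (ρ : Matrix (Fin 2) (Fin 2) ℂ) : ℝ :=
  Real.sqrt (2 * (1 - (Matrix.trace (ρ * ρ)).re))

/-- The GME measure of a pure three-qubit state:
minimum of `√(S_L(ρ_γ))` over the three bipartitions. -/
noncomputable def EmPure (c : Fin 2 → Fin 2 → Fin 2 → ℂ) : ℝ :=
  min (min (sqrtSL (rho1 c)) (sqrtSL (rho2 c))) (sqrtSL (rho3 c))

/-- Trace of `ρ²` for the Gram matrix of a 2×4 matrix with rows `x`, `y`. -/
noncomputable def gramT (x0 x1 x2 x3 y0 y1 y2 y3 : ℂ) : ℂ :=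
  (x0 * (starRingEnd ℂ) x0 + x1 * (starRingEnd ℂ) x1 + x2 * (starRingEnd ℂ) x2 +
      x3 * (starRingEnd ℂ) x3) ^ 2 +
    (y0 * (starRingEnd ℂ) y0 + y1 * (starRingEnd ℂ) y1 + y2 * (starRingEnd ℂ) y2 +
      y3 * (starRingEnd ℂ) y3) ^ 2 +
    2 * (x0 * (starRingEnd ℂ) y0 + x1 * (starRingEnd ℂ) y1 + x2 * (starRingEnd ℂ) y2 +
      x3 * (starRingEnd ℂ) y3) *
      (y0 * (starRingEnd ℂ) x0 + y1 * (starRingEnd ℂ) x1 + y2 * (starRingEnd ℂ) x2 +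
      y3 * (starRingEnd ℂ) x3)

set_option maxHeartbeats 1600000 in
lemma cauchy_binet_2x4 (x0 x1 x2 x3 y0 y1 y2 y3 : ℂ)
    (h : Complex.normSq x0 + Complex.normSq x1 + Complex.normSq x2 + Complex.normSq x3 +
         (Complex.normSq y0 + Complex.normSq y1 + Complex.normSq y2 + Complex.normSq y3) = 1) :
    2 * (1 - (gramT x0 x1 x2 x3 y0 y1 y2 y3).re) =
    4 * (Complex.normSq (x0 * y1 - x1 * y0) + Complex.normSq (x0 * y2 - x2 * y0) +
         Complex.normSq (x0 * y3 - x3 * y0) + Complex.normSq (x1 * y2 - x2 * y1) +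
         Complex.normSq (x1 * y3 - x3 * y1) + Complex.normSq (x2 * y3 - x3 * y2)) := by
  have h2 : (Complex.normSq x0 + Complex.normSq x1 + Complex.normSq x2 + Complex.normSq x3 +
         (Complex.normSq y0 + Complex.normSq y1 + Complex.normSq y2 + Complex.normSq y3)) ^ 2
       = 1 := by rw [h]; norm_num
  nth_rewrite 1 [← h2]
  simp only [gramT, Complex.normSq_apply, Complex.mul_re, Complex.mul_im, Complex.add_re,
    Complex.add_im, Complex.sub_re, Complex.sub_im, Complex.conj_re, Complex.conj_im,
    Complex.re_ofNat, Complex.im_ofNat, Complex.one_re, Complex.one_im, pow_two]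
  ring

lemma cut_bound (x0 x1 x2 x3 y0 y1 y2 y3 : ℂ)
    (h : Complex.normSq x0 + Complex.normSq x1 + Complex.normSq x2 + Complex.normSq x3 +
         (Complex.normSq y0 + Complex.normSq y1 + Complex.normSq y2 + Complex.normSq y3) = 1) :
    Real.sqrt 2 * ((‖x1‖ * ‖y0‖ - ‖x0‖ * ‖y1‖) +
      (‖x2‖ * ‖y0‖ - ‖x0‖ * ‖y2‖)) ≤
    Real.sqrt (2 * (1 - (gramT x0 x1 x2 x3 y0 y1 y2 y3).re)) := by
  set u := ‖x0 * y1 - x1 * y0‖ with hu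
  set v := ‖x0 * y2 - x2 * y0‖ with hv
  have hu0 : 0 ≤ u := norm_nonneg _
  have hv0 : 0 ≤ v := norm_nonneg _
  have h1 : ‖x1‖ * ‖y0‖ - ‖x0‖ * ‖y1‖ ≤ u := by
    have t := norm_add_le (x1 * y0 - x0 * y1) (x0 * y1)
    have t2 : ‖x1 * y0 - x0 * y1‖ = u := by rw [hu, norm_sub_rev]
    simp only [sub_add_cancel, norm_mul] at t
    rw [t2] at t
    linarith
  have h2 : ‖x2‖ * ‖y0‖ - ‖x0‖ * ‖y2‖ ≤ v := by
    have t := norm_add_le (x2 * y0 - x0 * y2) (x0 * y2)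
    have t2 : ‖x2 * y0 - x0 * y2‖ = v := by rw [hv, norm_sub_rev]
    simp only [sub_add_cancel, norm_mul] at t
    rw [t2] at t
    linarith
  have hcb := cauchy_binet_2x4 x0 x1 x2 x3 y0 y1 y2 y3 h
  have key : 2 * (u + v) ^ 2 ≤ 2 * (1 - (gramT x0 x1 x2 x3 y0 y1 y2 y3).re) := by
    rw [hcb]
    nlinarith [Complex.sq_norm (x0 * y1 - x1 * y0), Complex.sq_norm (x0 * y2 - x2 * y0),
      Complex.normSq_nonneg (x0 * y3 - x3 * y0), Complex.normSq_nonneg (x1 * y2 - x2 * y1),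
      Complex.normSq_nonneg (x1 * y3 - x3 * y1), Complex.normSq_nonneg (x2 * y3 - x3 * y2),
      sq_nonneg (u - v)]
  calc Real.sqrt 2 * ((‖x1‖ * ‖y0‖ - ‖x0‖ * ‖y1‖) +
        (‖x2‖ * ‖y0‖ - ‖x0‖ * ‖y2‖))
      ≤ Real.sqrt 2 * (u + v) :=
        mul_le_mul_of_nonneg_left (add_le_add h1 h2) (Real.sqrt_nonneg 2)
    _ = Real.sqrt (2 * (u + v) ^ 2) := by
        rw [Real.sqrt_mul (by norm_num : (0:ℝ) ≤ 2), Real.sqrt_sq (by linarith)]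
    _ ≤ Real.sqrt (2 * (1 - (gramT x0 x1 x2 x3 y0 y1 y2 y3).re)) := Real.sqrt_le_sqrt key

set_option maxHeartbeats 1600000 in
/-- For any normalized three-qubit pure state with coefficients `c_{ijk}`,
`E_m(|ψ⟩) ≥ √2(|c₀₀₁c₁₀₀| + |c₀₀₁c₀₁₀| + |c₁₀₀c₀₁₀|)
 − (√2/2)(|c₀₁₀|² + |c₁₀₀|² + |c₀₀₁|²)
 − √2(|c₁₀₁c₀₀₀| + |c₁₁₀c₀₀₀| + |c₀₁₁c₀₀₀|)`. -/
theorem EmPure_lower_bound (c : Fin 2 → Fin 2 → Fin 2 → ℂ)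
    (hnorm : ∑ i : Fin 2, ∑ j : Fin 2, ∑ k : Fin 2, Complex.normSq (c i j k) = 1) :
    EmPure c ≥
      Real.sqrt 2 * (‖c 0 0 1 * c 1 0 0‖ + ‖c 0 0 1 * c 0 1 0‖ +
          ‖c 1 0 0 * c 0 1 0‖)
      - (Real.sqrt 2 / 2) * (‖c 0 1 0‖ ^ 2 + ‖c 1 0 0‖ ^ 2 +
          ‖c 0 0 1‖ ^ 2)
      - Real.sqrt 2 * (‖c 1 0 1 * c 0 0 0‖ + ‖c 1 1 0 * c 0 0 0‖ +
          ‖c 0 1 1 * c 0 0 0‖) := by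
  have hn := hnorm
  simp only [Fin.sum_univ_two] at hn
  set A := ‖c 0 0 1‖ with hA
  set B := ‖c 1 0 0‖ with hB
  set D := ‖c 0 1 0‖ with hD
  set E := ‖c 0 0 0‖ with hE
  set F := ‖c 1 0 1‖ with hF
  set G := ‖c 1 1 0‖ with hG
  set H := ‖c 0 1 1‖ with hH
  have hA0 : 0 ≤ A := norm_nonneg _
  have hB0 : 0 ≤ B := norm_nonneg _
  have hD0 : 0 ≤ D := norm_nonneg _
  have hE0 : 0 ≤ E := norm_nonneg _
  have hF0 : 0 ≤ F := norm_nonneg _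
  have hG0 : 0 ≤ G := norm_nonneg _
  have hH0 : 0 ≤ H := norm_nonneg _
  have hs0 : (0:ℝ) ≤ Real.sqrt 2 := Real.sqrt_nonneg 2
  -- the right-hand side
  set R := Real.sqrt 2 * (‖c 0 0 1 * c 1 0 0‖ + ‖c 0 0 1 * c 0 1 0‖ +
          ‖c 1 0 0 * c 0 1 0‖)
      - (Real.sqrt 2 / 2) * (D ^ 2 + B ^ 2 + A ^ 2)
      - Real.sqrt 2 * (‖c 1 0 1 * c 0 0 0‖ + ‖c 1 1 0 * c 0 0 0‖ +
          ‖c 0 1 1 * c 0 0 0‖) with hR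
  have hRval : R = Real.sqrt 2 * (A * B + A * D + B * D)
      - (Real.sqrt 2 / 2) * (D ^ 2 + B ^ 2 + A ^ 2)
      - Real.sqrt 2 * (F * E + G * E + H * E) := by
    rw [hR]; simp only [norm_mul]; try ring
  -- cut 1
  have tr1 : Matrix.trace (rho1 c * rho1 c) =
      gramT (c 0 0 0) (c 0 0 1) (c 0 1 0) (c 0 1 1) (c 1 0 0) (c 1 0 1) (c 1 1 0) (c 1 1 1) := by
    simp [Matrix.trace, Matrix.mul_apply, Fin.sum_univ_two, rho1, gramT]
    try ring
  have hb1 := cut_bound (c 0 0 0) (c 0 0 1) (c 0 1 0) (c 0 1 1)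
      (c 1 0 0) (c 1 0 1) (c 1 1 0) (c 1 1 1) (by linarith)
  have goal1 : Real.sqrt 2 * (A * B + A * D + B * D)
      - (Real.sqrt 2 / 2) * (D ^ 2 + B ^ 2 + A ^ 2)
      - Real.sqrt 2 * (F * E + G * E + H * E)
      ≤ Real.sqrt 2 * (A * B - E * F + (D * B - E * G)) := by
    nlinarith [mul_nonneg hs0 (sq_nonneg (A - D)), mul_nonneg hs0 (sq_nonneg B),
      mul_nonneg hs0 (mul_nonneg hH0 hE0)]
  have hs1 : R ≤ sqrtSL (rho1 c) := by
    rw [sqrtSL, tr1]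
    refine le_trans ?_ hb1
    rw [hRval]
    exact goal1
  -- cut 2
  have tr2 : Matrix.trace (rho2 c * rho2 c) =
      gramT (c 0 0 0) (c 0 0 1) (c 1 0 0) (c 1 0 1) (c 0 1 0) (c 0 1 1) (c 1 1 0) (c 1 1 1) := by
    simp [Matrix.trace, Matrix.mul_apply, Fin.sum_univ_two, rho2, gramT]
    ring
  have hb2 := cut_bound (c 0 0 0) (c 0 0 1) (c 1 0 0) (c 1 0 1)
      (c 0 1 0) (c 0 1 1) (c 1 1 0) (c 1 1 1) (by linarith)
  rw [← hH, ← hG] at hb2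
  have goal2 : Real.sqrt 2 * (A * B + A * D + B * D)
      - (Real.sqrt 2 / 2) * (D ^ 2 + B ^ 2 + A ^ 2)
      - Real.sqrt 2 * (F * E + G * E + H * E)
      ≤ Real.sqrt 2 * (A * D - E * H + (B * D - E * G)) := by
    nlinarith [mul_nonneg hs0 (sq_nonneg (A - B)), mul_nonneg hs0 (sq_nonneg D),
      mul_nonneg hs0 (mul_nonneg hF0 hE0)]
  have hs2 : R ≤ sqrtSL (rho2 c) := by
    rw [sqrtSL, tr2]
    refine le_trans ?_ hb2
    rw [hRval]
    exact goal2
  -- cut 3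
  have tr3 : Matrix.trace (rho3 c * rho3 c) =
      gramT (c 0 0 0) (c 0 1 0) (c 1 0 0) (c 1 1 0) (c 0 0 1) (c 0 1 1) (c 1 0 1) (c 1 1 1) := by
    simp [Matrix.trace, Matrix.mul_apply, Fin.sum_univ_two, rho3, gramT]
    ring
  have hb3 := cut_bound (c 0 0 0) (c 0 1 0) (c 1 0 0) (c 1 1 0)
      (c 0 0 1) (c 0 1 1) (c 1 0 1) (c 1 1 1) (by linarith)
  rw [← hH] at hb3
  have goal3 : Real.sqrt 2 * (A * B + A * D + B * D)
      - (Real.sqrt 2 / 2) * (D ^ 2 + B ^ 2 + A ^ 2)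
      - Real.sqrt 2 * (F * E + G * E + H * E)
      ≤ Real.sqrt 2 * (D * A - E * H + (B * A - E * F)) := by
    nlinarith [mul_nonneg hs0 (sq_nonneg (D - B)), mul_nonneg hs0 (sq_nonneg A),
      mul_nonneg hs0 (mul_nonneg hG0 hE0)]
  have hs3 : R ≤ sqrtSL (rho3 c) := by
    rw [sqrtSL, tr3]
    refine le_trans ?_ hb3
    rw [hRval]
    exact goal3
  exact le_min (le_min hs1 hs2) hs3
end

section
/- For any density matrix ρ on a bipartite system and any basis states |η₁⟩, |η₂⟩, if the partial transpose ρ^{T_γ} of ρ is positive semidefinite, then √(ρ_{η₁^γη₁^γ} · ρ_{η₂^γη₂^γ}) ≥ |ρ_{η₁η₂}|; i.e., the nonlinear witness W^γ_{(η₁,η₂)}(ρ) = |ρ_{η₁η₂}| − √(ρ_{η₁^γη₁^γ}ρ_{η₂^γη₂^γ}) is nonpositive on all PPT states. -/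
open Finset
open scoped ComplexOrder

/-- The partial transpose of `ρ` over the subsystems in `γ`, in the computational
basis: `(ρ^{T_γ})_{ηη'}` takes the `γ`-components of the row index from `η'` and
vice versa. -/
def ptrans {n d : ℕ} (γ : Finset (Fin n))
    (ρ : Matrix (Fin n → Fin d) (Fin n → Fin d) ℂ) :
    Matrix (Fin n → Fin d) (Fin n → Fin d) ℂ :=
  fun η η' => ρ (swapIdx γ η η') (swapIdx γ η' η)

open Matrix in
/-- Cauchy–Schwarz for entries of a positive semidefinite matrix. -/
lemma psd_entry_abs_le {m : Type*} [Fintype m] [DecidableEq m]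
    {M : Matrix m m ℂ} (hM : M.PosSemidef) (a b : m) :
    ‖M a b‖ ≤ Real.sqrt ((M a a).re * (M b b).re) := by
  have herm := hM.1
  let c : PreInnerProductSpace.Core ℂ (m → ℂ) :=
  { inner := fun x y => star x ⬝ᵥ M.mulVec y
    conj_inner_symm := by
      intro x y
      show star (star y ⬝ᵥ M *ᵥ x) = star x ⬝ᵥ M *ᵥ y
      conv_rhs => rw [← herm.eq, Matrix.dotProduct_mulVec, ← Matrix.star_mulVec,
        Matrix.star_dotProduct]
    re_inner_nonneg := fun x => hM.re_dotProduct_nonneg x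
    add_left := by
      intro x y z
      show star (x + y) ⬝ᵥ _ = _
      rw [star_add, add_dotProduct]
    smul_left := by
      intro x y r
      show star (r • x) ⬝ᵥ _ = _
      rw [star_smul, smul_dotProduct]
      rfl }
  have key := @InnerProductSpace.Core.inner_mul_inner_self_le ℂ (m → ℂ) _ _ _ c
    (Pi.single a 1) (Pi.single b 1)
  have hinner : ∀ i j : m,
      (@inner ℂ (m → ℂ) c.toInner ((Pi.single i 1 : m → ℂ)) ((Pi.single j 1 : m → ℂ))) = M i j := by
    intro i j
    show star ((Pi.single i 1 : m → ℂ)) ⬝ᵥ M.mulVec ((Pi.single j 1 : m → ℂ)) = M i j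
    rw [Matrix.mulVec_single]
    have hst : star ((Pi.single i 1 : m → ℂ)) = (Pi.single i 1 : m → ℂ) := by
      ext k
      by_cases h : k = i <;> simp [h, Pi.single_apply]
    rw [hst, single_dotProduct]
    simp [mul_comm]
  rw [hinner a b, hinner b a, hinner a a, hinner b b] at key
  have hda : 0 ≤ (M a a).re := by
    have := c.re_inner_nonneg (Pi.single a 1)
    rwa [show (@inner ℂ (m → ℂ) c.toInner ((Pi.single a 1 : m → ℂ)) ((Pi.single a 1 : m → ℂ))) = M a a
      from hinner a a] at this
  have hdb : 0 ≤ (M b b).re := by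
    have := c.re_inner_nonneg (Pi.single b 1)
    rwa [show (@inner ℂ (m → ℂ) c.toInner ((Pi.single b 1 : m → ℂ)) ((Pi.single b 1 : m → ℂ))) = M b b
      from hinner b b] at this
  have hsym : ‖M b a‖ = ‖M a b‖ := by
    rw [← herm.apply b a]
    simp
  have key' : ‖M a b‖ ^ 2 ≤ (M a a).re * (M b b).re := by
    calc ‖M a b‖ ^ 2 = ‖M a b‖ * ‖M b a‖ := by
          rw [sq]; simp [hsym]
      _ ≤ (M a a).re * (M b b).re := key
  have := Real.sqrt_le_sqrt key'
  rwa [Real.sqrt_sq (norm_nonneg _)] at this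

/-- If the partial transpose `ρ^{T_γ}` of a density matrix `ρ` is positive
semidefinite, then `√(ρ_{η₁^γη₁^γ} ρ_{η₂^γη₂^γ}) ≥ |ρ_{η₁η₂}|`; i.e. the nonlinear
witness `W^γ_{(η₁,η₂)}(ρ) = |ρ_{η₁η₂}| − √(ρ_{η₁^γη₁^γ}ρ_{η₂^γη₂^γ})` is nonpositive
on all PPT states. -/
theorem nonlinear_witness_nonpos_on_ppt {n d : ℕ}
    (ρ : Matrix (Fin n → Fin d) (Fin n → Fin d) ℂ)
    (hρ : ρ.PosSemidef) (htr : ρ.trace = 1)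
    (γ : Finset (Fin n)) (hppt : (ptrans γ ρ).PosSemidef) (η₁ η₂ : Fin n → Fin d) :
    ‖ρ η₁ η₂‖ ≤
      Real.sqrt ((ρ (swapIdx γ η₁ η₂) (swapIdx γ η₁ η₂)).re *
        (ρ (swapIdx γ η₂ η₁) (swapIdx γ η₂ η₁)).re) := by
  set a := swapIdx γ η₁ η₂
  set b := swapIdx γ η₂ η₁
  have hab : swapIdx γ a b = η₁ := by
    funext k; simp only [swapIdx, a, b]; by_cases h : k ∈ γ <;> simp [h]
  have hba : swapIdx γ b a = η₂ := by
    funext k; simp only [swapIdx, a, b]; by_cases h : k ∈ γ <;> simp [h]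
  have haa : swapIdx γ a a = a := by
    funext k; simp only [swapIdx]; by_cases h : k ∈ γ <;> simp [h]
  have hbb : swapIdx γ b b = b := by
    funext k; simp only [swapIdx]; by_cases h : k ∈ γ <;> simp [h]
  have h1 : ptrans γ ρ a b = ρ η₁ η₂ := by rw [ptrans, hab, hba]
  have h2 : ptrans γ ρ a a = ρ a a := by rw [ptrans, haa]
  have h3 : ptrans γ ρ b b = ρ b b := by rw [ptrans, hbb]
  have := psd_entry_abs_le hppt a b
  rwa [h1, h2, h3] at this
end
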